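/- For finite disjunctive logic programs P and Q, P and Q are uniformly equivalent if and only if UE(P) = UE(Q), where UE(P) is the set of UE-models of P. -/

import Mathlib

structure Rule where
  head : Finset ℕ
  pos : Finset ℕ
  neg : Finset ℕ

abbrev Interp := Set ℕ
abbrev Program := Set Rule

/-- Classical satisfaction of a rule by an interpretation. -/
def Rule.satisfied (I : Interp) (r : Rule) : Prop :=
  ((↑r.pos ⊆ I) ∧ ∀ a ∈ r.neg, a ∉ I) → ∃ a ∈ r.head, a ∈ I

/-- `I` is a classical model of the program `P`. -/
def Models (I : Interp) (P : Program) : Prop := ∀ r ∈ P, Rule.satisfied I r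

/-- `X` models the Gelfond-Lifschitz reduct `P^Y`. -/
def ModelsReduct (X : Interp) (P : Program) (Y : Interp) : Prop :=
  ∀ r ∈ P, (∀ a ∈ r.neg, a ∉ Y) → (↑r.pos ⊆ X) → ∃ a ∈ r.head, a ∈ X

/-- `Y` is an answer set of `P`: a minimal model of the reduct `P^Y`. -/
def AnswerSet (P : Program) (Y : Interp) : Prop :=
  ModelsReduct Y P Y ∧ ∀ Z : Interp, Z ⊂ Y → ¬ ModelsReduct Z P Y

/-- `(X,Y)` is an SE-model of `P`. -/
def SEModel (P : Program) (X Y : Interp) : Prop :=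
  X ⊆ Y ∧ Models Y P ∧ ModelsReduct X P Y

/-- `(X,Y)` is a UE-model of `P`. -/
def UEModel (P : Program) (X Y : Interp) : Prop :=
  SEModel P X Y ∧ ∀ X', SEModel P X' Y → X ⊂ X' → X' = Y

/-- The program consisting of the atoms in `F` as facts. -/
def Facts (F : Set ℕ) : Program := { r | ∃ a ∈ F, r = ⟨{a}, ∅, ∅⟩ }

/-- Uniform equivalence of programs. -/
def UnifEquiv (P Q : Program) : Prop :=
  ∀ F : Set ℕ, ∀ Y : Interp, AnswerSet (P ∪ Facts F) Y ↔ AnswerSet (Q ∪ Facts F) Y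

/-- Strong equivalence of programs. -/
def StrongEquiv (P Q : Program) : Prop :=
  ∀ R : Program, ∀ Y : Interp, AnswerSet (P ∪ R) Y ↔ AnswerSet (Q ∪ R) Y

def Rule.atoms (r : Rule) : Finset ℕ := r.head ∪ r.pos ∪ r.neg

/-- All atoms occurring in `R` belong to `A`. -/
def ProgramOver (A : Set ℕ) (R : Program) : Prop := ∀ r ∈ R, ↑r.atoms ⊆ A

/-- Strong equivalence relative to a set of atoms `A`. -/
def RelStrongEquiv (A : Set ℕ) (P Q : Program) : Prop :=
  ∀ R : Program, ProgramOver A R →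
    ∀ Y : Interp, AnswerSet (P ∪ R) Y ↔ AnswerSet (Q ∪ R) Y

/-- Uniform equivalence relative to a set of atoms `A`. -/
def RelUnifEquiv (A : Set ℕ) (P Q : Program) : Prop :=
  ∀ F : Set ℕ, F ⊆ A →
    ∀ Y : Interp, AnswerSet (P ∪ Facts F) Y ↔ AnswerSet (Q ∪ Facts F) Y

/-- A unary rule: one head atom, no negation, at most one positive body atom. -/
def Unary (r : Rule) : Prop := r.head.card = 1 ∧ r.neg = ∅ ∧ r.pos.card ≤ 1

/-- `(X,Y)` is a (relativized) `A`-SE-model of `P`. -/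
def ASEModel (A : Set ℕ) (P : Program) (X Y : Interp) : Prop :=
  (X = Y ∨ X ⊂ Y ∩ A) ∧ Models Y P ∧
  (∀ Y' : Interp, Y' ⊂ Y → Y' ∩ A = Y ∩ A → ¬ ModelsReduct Y' P Y) ∧
  (X ⊂ Y → ∃ X' : Interp, X' ⊆ Y ∧ X' ∩ A = X ∧ ModelsReduct X' P Y)

/-- `(X,Y)` is a (relativized) `A`-UE-model of `P`. -/
def AUEModel (A : Set ℕ) (P : Program) (X Y : Interp) : Prop :=
  ASEModel A P X Y ∧ ∀ X', ASEModel A P X' Y → X ⊂ X' → X' = Y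

/-- A positive program: all rules have empty negative body. -/
def Positive (P : Program) : Prop := ∀ r ∈ P, r.neg = ∅

/-- Positive dependency: edge from a positive body atom to a head atom. -/
def Dep (P : Program) (a b : ℕ) : Prop := ∃ r ∈ P, a ∈ r.pos ∧ b ∈ r.head

/-- Head-cycle freeness: no directed cycle of the positive dependency graph
through two distinct head atoms of one rule. -/
def HCF (P : Program) : Prop :=
  ∀ r ∈ P, ∀ a ∈ r.head, ∀ b ∈ r.head, a ≠ b →
    ¬ (Relation.ReflTransGen (Dep P) a b ∧ Relation.ReflTransGen (Dep P) b a)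

/-- The shift of a single rule. -/
def Rule.shift (r : Rule) : Program :=
  if r.head = ∅ then {r}
  else { r' | ∃ a ∈ r.head, r' = ⟨{a}, r.pos, r.neg ∪ (r.head.erase a)⟩ }

/-- The shift of a program. -/
def shiftProg (P : Program) : Program := ⋃ r ∈ P, r.shift

/-- The set of SE-models of `P` as a set of pairs. -/
def SEset (P : Program) : Set (Interp × Interp) := { p | SEModel P p.1 p.2 }

lemma modelsReduct_self {P : Program} {Y : Interp} : ModelsReduct Y P Y ↔ Models Y P := by
  constructor <;> intro h r hr
  · intro hcond; exact h r hr hcond.2 hcond.1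
  · intro hneg hpos; exact h r hr ⟨hpos, hneg⟩

lemma reduct_union_facts {P : Program} {F : Set ℕ} {Z Y : Interp} :
    ModelsReduct Z (P ∪ Facts F) Y ↔ ModelsReduct Z P Y ∧ F ⊆ Z := by
  constructor
  · intro h
    refine ⟨fun r hr => h r (Or.inl hr), fun a ha => ?_⟩
    have := h ⟨{a}, ∅, ∅⟩ (Or.inr ⟨a, ha, rfl⟩) (by simp) (by simp)
    simpa using this
  · rintro ⟨h1, h2⟩ r hr
    rcases hr with hr | ⟨a, ha, rfl⟩
    · exact h1 r hr
    · intro _ _; exact ⟨a, by simp, h2 ha⟩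

lemma answerSet_facts {P : Program} {F : Set ℕ} {Y : Interp} :
    AnswerSet (P ∪ Facts F) Y ↔
      Models Y P ∧ F ⊆ Y ∧
        ∀ X : Interp, X ⊂ Y → ModelsReduct X P Y → ¬ F ⊆ X := by
  unfold AnswerSet
  rw [reduct_union_facts, modelsReduct_self]
  constructor
  · rintro ⟨⟨hm, hF⟩, hmin⟩
    exact ⟨hm, hF, fun X hX hXr hFX => hmin X hX (reduct_union_facts.mpr ⟨hXr, hFX⟩)⟩
  · rintro ⟨hm, hF, h⟩
    refine ⟨⟨hm, hF⟩, fun Z hZ hZr => ?_⟩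
    obtain ⟨h1, h2⟩ := reduct_union_facts.mp hZr
    exact h Z hZ h1 h2

lemma ue_self {P : Program} {Y : Interp} : UEModel P Y Y ↔ Models Y P := by
  constructor
  · rintro ⟨⟨_, h, _⟩, _⟩; exact h
  · intro h
    refine ⟨⟨subset_rfl, h, modelsReduct_self.mpr h⟩, fun X' hX' hss => ?_⟩
    exact absurd hX'.1 hss.2

/-- For finite programs, any proper SE-model extends to a proper UE-model. -/
lemma exists_ue {P : Program} (hP : P.Finite) {X Y : Interp}
    (hXY : X ⊂ Y) (hY : Models Y P) (hX : ModelsReduct X P Y) :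
    ∃ M, X ⊆ M ∧ M ⊂ Y ∧ UEModel P M Y := by
  classical
  set A : Set ℕ := ⋃ r ∈ P, (↑r.atoms : Set ℕ) with hA
  have hAfin : A.Finite := hP.biUnion (fun r _ => (r.atoms).finite_toSet)
  have hpos_sub : ∀ r ∈ P, (↑r.pos : Set ℕ) ⊆ A := by
    intro r hr a ha
    exact Set.mem_biUnion hr (Finset.mem_coe.mpr (by
      simp only [Rule.atoms, Finset.mem_union]
      exact Or.inl (Or.inr (Finset.mem_coe.mp ha))))
  by_cases hcase : X ∪ (Y \ A) = Y
  · -- every element of Y \ X avoids A; then Y \ {y} is a UE-model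
    have hsub : ∀ {Z : Interp}, Z ⊆ Y → Z ∩ A ⊆ X := by
      intro Z h2 a ha
      by_contra haX
      have : a ∈ X ∪ (Y \ A) := by rw [hcase]; exact h2 ha.1
      rcases this with h | h
      · exact haX h
      · exact h.2 ha.2
    obtain ⟨y, hyY, hyX⟩ := Set.exists_of_ssubset hXY
    have hXM : X ⊆ Y \ {y} := fun a ha =>
      ⟨hXY.1 ha, by rintro rfl; exact hyX ha⟩
    have hMY : Y \ {y} ⊂ Y := by
      refine ⟨Set.diff_subset, fun hcon => ?_⟩
      exact (hcon hyY).2 rfl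
    have hMred : ModelsReduct (Y \ {y}) P Y := by
      intro r hr hneg hpos
      have hposX : (↑r.pos : Set ℕ) ⊆ X := by
        intro a ha
        exact hsub Set.diff_subset ⟨hpos ha, hpos_sub r hr ha⟩
      obtain ⟨a, ha1, ha2⟩ := hX r hr hneg hposX
      exact ⟨a, ha1, hXM ha2⟩
    refine ⟨Y \ {y}, hXM, hMY, ⟨Set.diff_subset, hY, hMred⟩, ?_⟩
    intro X' hX' hss
    refine hX'.1.antisymm (fun z hz => ?_)
    by_cases hzy : z = y
    · obtain ⟨w, hw1, hw2⟩ := Set.exists_of_ssubset hss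
      have hwY : w ∈ Y := hX'.1 hw1
      have : w = y := by
        by_contra hne
        exact hw2 ⟨hwY, hne⟩
      subst hzy; rwa [← this]
    · exact hss.1 ⟨hz, hzy⟩
  · -- B = X ∪ (Y \ A) is a proper reduct-model with finite complement in Y
    set B : Interp := X ∪ (Y \ A) with hB
    have hBY : B ⊆ Y := Set.union_subset hXY.1 Set.diff_subset
    have hBne : B ≠ Y := hcase
    have hBred : ModelsReduct B P Y := by
      intro r hr hneg hpos
      have hposX : (↑r.pos : Set ℕ) ⊆ X := by
        intro a ha
        rcases hpos ha with h | h
        · exact h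
        · exact absurd (hpos_sub r hr ha) h.2
      obtain ⟨a, ha1, ha2⟩ := hX r hr hneg hposX
      exact ⟨a, ha1, Or.inl ha2⟩
    have hYB : Y \ B ⊆ A := by
      intro a ha
      by_contra haA
      exact ha.2 (Or.inr ⟨ha.1, haA⟩)
    have hYBfin : (Y \ B).Finite := hAfin.subset hYB
    set S : Set Interp := {Z | B ⊆ Z ∧ Z ⊆ Y ∧ Z ≠ Y ∧ ModelsReduct Z P Y} with hS
    have hSfin : S.Finite := by
      have himg : (fun Z => Z \ B) '' S ⊆ {s | s ⊆ Y \ B} := by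
        rintro s ⟨Z, hZ, rfl⟩
        exact fun a ha => ⟨hZ.2.1 ha.1, ha.2⟩
      refine Set.Finite.of_finite_image ((hYBfin.finite_subsets).subset himg) ?_
      intro Z1 h1 Z2 h2 he
      have he' : Z1 \ B = Z2 \ B := he
      have h' : B ∪ (Z1 \ B) = B ∪ (Z2 \ B) := by rw [he']
      rwa [Set.union_diff_cancel h1.1, Set.union_diff_cancel h2.1] at h'
    have hSne : S.Nonempty := ⟨B, subset_rfl, hBY, hBne, hBred⟩
    obtain ⟨M, hMS, hMmax⟩ := Set.Finite.exists_maximalFor id S hSfin hSne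
    obtain ⟨hBM, hMY, hMne, hMred⟩ := hMS
    refine ⟨M, (Set.subset_union_left).trans hBM, ⟨hMY, fun hc => hMne (hMY.antisymm hc)⟩, ⟨hMY, hY, hMred⟩, ?_⟩
    intro X' hX' hss
    by_contra hne
    have hX'S : X' ∈ S := ⟨hBM.trans hss.1, hX'.1, hne, hX'.2.2⟩
    have := hMmax hX'S hss.1
    exact hss.2 this

/-- Transfer of UE-models under uniform equivalence. -/
lemma ue_transfer {P Q : Program} (hQ : Q.Finite) (hu : UnifEquiv P Q)
    (hmod : ∀ Y : Interp, Models Y P ↔ Models Y Q) {X Y : Interp}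
    (h : UEModel P X Y) : UEModel Q X Y := by
  obtain ⟨⟨hXsubY, hYP, hXred⟩, hmax⟩ := h
  have hYQ : Models Y Q := (hmod Y).mp hYP
  by_cases hxy : X = Y
  · subst hxy; exact ue_self.mpr hYQ
  · have hss : X ⊂ Y := lt_of_le_of_ne hXsubY hxy
    have hnp : ¬ AnswerSet (P ∪ Facts X) Y := by
      rw [answerSet_facts]
      rintro ⟨-, -, h3⟩
      exact h3 X hss hXred subset_rfl
    have hnq : ¬ AnswerSet (Q ∪ Facts X) Y := fun h' => hnp ((hu X Y).mpr h')
    have hZ : ∃ Z, Z ⊂ Y ∧ ModelsReduct Z Q Y ∧ X ⊆ Z := by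
      by_contra hcon
      push_neg at hcon
      exact hnq (answerSet_facts.mpr ⟨hYQ, hXsubY, fun Z h1 h2 h3 => hcon Z h1 h2 h3⟩)
    obtain ⟨Z, hZY, hZred, hXZ⟩ := hZ
    obtain ⟨M, hZM, hMY, hMue⟩ := exists_ue hQ hZY hYQ hZred
    have hXM : X ⊆ M := hXZ.trans hZM
    have hMX : M = X := by
      by_contra hne
      have hssXM : X ⊂ M := lt_of_le_of_ne hXM (fun e => hne e.symm)
      have hnq2 : ¬ AnswerSet (Q ∪ Facts M) Y := by
        rw [answerSet_facts]
        rintro ⟨-, -, h3⟩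
        exact h3 M hMY hMue.1.2.2 subset_rfl
      have hnp2 : ¬ AnswerSet (P ∪ Facts M) Y := fun h' => hnq2 ((hu M Y).mp h')
      have hW : ∃ W, W ⊂ Y ∧ ModelsReduct W P Y ∧ M ⊆ W := by
        by_contra hcon
        push_neg at hcon
        exact hnp2 (answerSet_facts.mpr ⟨hYP, hMY.1, fun W h1 h2 h3 => hcon W h1 h2 h3⟩)
      obtain ⟨W, hWY, hWred, hMW⟩ := hW
      have : W = Y := hmax W ⟨hWY.1, hYP, hWred⟩ (lt_of_lt_of_le hssXM hMW)
      exact hWY.2 this.ge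
    rwa [hMX] at hMue

theorem stmt3 (P Q : Program) (hP : P.Finite) (hQ : Q.Finite) :
    UnifEquiv P Q ↔ ∀ X Y : Interp, UEModel P X Y ↔ UEModel Q X Y := by
  constructor
  · intro hu
    have hmod : ∀ Y : Interp, Models Y P ↔ Models Y Q := by
      intro Y
      have h := hu Y Y
      rw [answerSet_facts, answerSet_facts] at h
      constructor
      · intro hm
        exact (h.mp ⟨hm, subset_rfl, fun X hX _ hYX => absurd hYX hX.2⟩).1
      · intro hm
        exact (h.mpr ⟨hm, subset_rfl, fun X hX _ hYX => absurd hYX hX.2⟩).1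
    have hu' : UnifEquiv Q P := fun F Y => (hu F Y).symm
    exact fun X Y => ⟨ue_transfer hQ hu hmod, ue_transfer hP hu' (fun Y => (hmod Y).symm)⟩
  · intro hue F Y
    rw [answerSet_facts, answerSet_facts]
    have hmod : Models Y P ↔ Models Y Q := by
      rw [← ue_self (P := P), ← ue_self (P := Q)]; exact hue Y Y
    constructor
    · rintro ⟨h1, h2, h3⟩
      refine ⟨hmod.mp h1, h2, fun Z hZY hZred hFZ => ?_⟩
      obtain ⟨M, hZM, hMY, hMue⟩ := exists_ue hQ hZY (hmod.mp h1) hZred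
      have hMueP : UEModel P M Y := (hue M Y).mpr hMue
      exact h3 M hMY hMueP.1.2.2 (hFZ.trans hZM)
    · rintro ⟨h1, h2, h3⟩
      refine ⟨hmod.mpr h1, h2, fun Z hZY hZred hFZ => ?_⟩
      obtain ⟨M, hZM, hMY, hMue⟩ := exists_ue hP hZY (hmod.mpr h1) hZred
      have hMueQ : UEModel Q M Y := (hue M Y).mp hMue
      exact h3 M hMY hMueQ.1.2.2 (hFZ.trans hZM)
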